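/- Reflexivity is a three-space property: if Y is a closed subspace of a Banach space X such that both Y and the quotient X/Y are reflexive, then X is reflexive. -/

import Mathlib

noncomputable section

/-- A Banach space is reflexive if the canonical inclusion into its double dual is surjective. -/
def IsReflexiveSpace (𝕜 X : Type*) [NontriviallyNormedField 𝕜] [NormedAddCommGroup X]
    [NormedSpace 𝕜 X] : Prop :=
  Function.Surjective (NormedSpace.inclusionInDoubleDual 𝕜 X)

open NormedSpace ContinuousLinearMap

section Aux

variable {𝕜 E F : Type*} [NontriviallyNormedField 𝕜] [NormedAddCommGroup E] [NormedSpace 𝕜 E]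
  [NormedAddCommGroup F] [NormedSpace 𝕜 F] (S : Submodule 𝕜 E)

/-- The quotient map as a continuous linear map. -/
def mkCLM : E →L[𝕜] E ⧸ S :=
  ⟨S.mkQ, continuous_quot_mk⟩

@[simp] lemma mkCLM_apply (x : E) : mkCLM S x = Submodule.Quotient.mk x := rfl

/-- Lift a continuous linear map vanishing on `S` to the quotient. -/
def cliftQ (f : E →L[𝕜] F) (h : S ≤ f.ker) : (E ⧸ S) →L[𝕜] F :=
  ⟨S.liftQ f.toLinearMap h, by
    rw [S.isQuotientMap_mkQ.continuous_iff]
    exact f.continuous⟩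

@[simp] lemma cliftQ_mk (f : E →L[𝕜] F) (h : S ≤ f.ker) (x : E) :
    cliftQ S f h (Submodule.Quotient.mk x) = f x := rfl

end Aux

set_option maxHeartbeats 1000000

/-- Reflexivity is a three-space property: if a closed subspace `Y` of a Banach space `X` and
the quotient `X ⧸ Y` are both reflexive, then `X` is reflexive. -/
theorem reflexive_of_subspace_and_quotient {X : Type*} [NormedAddCommGroup X] [NormedSpace ℂ X]
    [CompleteSpace X] (Y : Submodule ℂ X) [IsClosed (Y : Set X)]
    (hY : IsReflexiveSpace ℂ Y) (hQ : IsReflexiveSpace ℂ (X ⧸ Y)) :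
    IsReflexiveSpace ℂ X := by
  intro Φ
  -- the quotient map and its transpose
  set π : X →L[ℂ] X ⧸ Y := mkCLM Y with hπ
  set πs : StrongDual ℂ (X ⧸ Y) →L[ℂ] StrongDual ℂ X := (ContinuousLinearMap.compL ℂ X (X ⧸ Y) ℂ).flip π
    with hπs
  -- push Φ to the double dual of the quotient and use reflexivity of X ⧸ Y
  obtain ⟨q, hq⟩ := hQ (Φ.comp πs)
  obtain ⟨x₀, hx₀⟩ := Submodule.Quotient.mk_surjective Y q
  -- Φ' vanishes on the annihilator of Y
  set Φ' : StrongDual ℂ (StrongDual ℂ X) := Φ - inclusionInDoubleDual ℂ X x₀ with hΦ'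
  -- the restriction map to the dual of Y
  set r : StrongDual ℂ X →L[ℂ] StrongDual ℂ Y := (ContinuousLinearMap.compL ℂ Y X ℂ).flip Y.subtypeL with hr
  have key : ∀ f : StrongDual ℂ X, r f = 0 → Φ' f = 0 := by
    intro f hf
    have hfY : ∀ y ∈ Y, f y = 0 := by
      intro y hy
      have := congrArg (fun g => g ⟨y, hy⟩) hf
      simpa [hr] using this
    -- factor f through the quotient
    set h : StrongDual ℂ (X ⧸ Y) := cliftQ Y f (fun y hy => hfY y hy) with hh
    have hfac : πs h = f := by
      ext x
      simp only [hπs, hπ, ContinuousLinearMap.flip_apply, ContinuousLinearMap.compL_apply,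
        ContinuousLinearMap.coe_comp', Function.comp_apply, mkCLM_apply, hh, cliftQ_mk]
      rfl
    have h1 : Φ' f = Φ (πs h) - f x₀ := by
      simp [hΦ', hfac, NormedSpace.dual_def]
    have h2 : Φ (πs h) = h q := by
      have := congrArg (fun Ψ => Ψ h) hq
      simpa [NormedSpace.dual_def] using this.symm
    have h3 : f x₀ = h q := by
      have : h (Submodule.Quotient.mk x₀) = f x₀ := rfl
      rw [hx₀] at this
      exact this.symm
    rw [h1, h2, h3, sub_self]
  -- r is surjective by Hahn–Banach
  have hrsurj : Function.Surjective r := by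
    intro g
    obtain ⟨G, hG, -⟩ := exists_extension_norm_eq Y g
    exact ⟨G, by ext y; simpa [hr] using hG y⟩
  -- factor Φ' through StrongDual ℂ Y
  set N : Submodule ℂ (StrongDual ℂ X) := r.ker with hN
  set rbar : (StrongDual ℂ X ⧸ N) →L[ℂ] StrongDual ℂ Y := cliftQ (E := StrongDual ℂ X) (F := StrongDual ℂ Y) N r le_rfl with hrbar
  have hrinj : rbar.ker = ⊥ := by
    rw [Submodule.eq_bot_iff]
    intro a ha
    obtain ⟨a, rfl⟩ := Submodule.Quotient.mk_surjective N a
    have ha' : r a = 0 := ha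
    exact (Submodule.Quotient.mk_eq_zero N).mpr ha'
  have hrsurj' : rbar.range = ⊤ := by
    rw [LinearMap.range_eq_top]
    intro g
    obtain ⟨f, hf⟩ := hrsurj g
    exact ⟨Submodule.Quotient.mk f, hf⟩
  haveI : IsClosed (N : Set (StrongDual ℂ X)) := ContinuousLinearMap.isClosed_ker r
  -- rbar is a continuous linear equivalence by the open mapping theorem
  set e : (StrongDual ℂ X ⧸ N) ≃L[ℂ] StrongDual ℂ Y := ContinuousLinearEquiv.ofBijective (𝕜 := ℂ) (𝕜' := ℂ) (σ := RingHom.id ℂ) (E := StrongDual ℂ X ⧸ N) (F := StrongDual ℂ Y) (by exact rbar) (by exact hrinj) (by exact hrsurj')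
    with he
  set Φ'bar : (StrongDual ℂ X ⧸ N) →L[ℂ] ℂ := cliftQ N Φ' (fun f hf => key f hf) with hΦ'bar
  set Ψ : StrongDual ℂ (StrongDual ℂ Y) := Φ'bar.comp (e.symm : StrongDual ℂ Y →L[ℂ] StrongDual ℂ X ⧸ N) with hΨ
  obtain ⟨y, hy⟩ := hY Ψ
  refine ⟨x₀ + (y : X), ?_⟩
  ext f
  have hΨrf : Ψ (r f) = Φ' f := by
    have h1 : e (Submodule.Quotient.mk f) = r f := rfl
    have h2 : e.symm (r f) = Submodule.Quotient.mk f := by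
      rw [← h1, ContinuousLinearEquiv.symm_apply_apply]
    simp [hΨ, h2, hΦ'bar]
    rfl
  have hfy : f (y : X) = Φ' f := by
    have := congrArg (fun Ψ' => Ψ' (r f)) hy
    simp only [NormedSpace.dual_def] at this
    rw [hΨrf] at this
    rw [← this]
    simp [hr]
  simp only [ContinuousLinearMap.add_apply, NormedSpace.dual_def, map_add]
  rw [hfy, hΦ']
  simp only [ContinuousLinearMap.sub_apply, NormedSpace.dual_def]
  ring
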